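/- Let X be a finite-dimensional normed space of dimension ≥ 2, and let B₁ ⊆ B₂ ⊆ C be convex bodies with C containing no lines. Then e(B₁) ⊆ e(B₂). -/

import Mathlib

/-- `K(y,B)`: the intersection of all closed half-spaces `[g ≤ g y]` over norm-one
functionals `g` supporting `B` at `y`. -/
def Kset {X : Type*} [NormedAddCommGroup X] [NormedSpace ℝ X]
    (B : Set X) (y : X) : Set X :=
  ⋂ g ∈ {g : X →L[ℝ] ℝ | ‖g‖ = 1 ∧ ∀ z ∈ B, g z ≤ g y}, {z : X | g z ≤ g y}

/-- The relative boundary of `B` in the subspace topology of `C`. -/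
def relBdry {X : Type*} [NormedAddCommGroup X] [NormedSpace ℝ X]
    (C B : Set X) : Set X :=
  (C ∩ closure B) ∩ closure (C \ B)

/-- The relative interior of `B` in the subspace topology of `C`. -/
def relInt {X : Type*} [NormedAddCommGroup X] [NormedSpace ℝ X]
    (C B : Set X) : Set X :=
  C \ closure (C \ B)

/-- The extension `e(B)` of a convex body `B ⊆ C`. -/
def eExt {X : Type*} [NormedAddCommGroup X] [NormedSpace ℝ X]
    (C B : Set X) : Set X :=
  ⋂ y ∈ relBdry C B, Kset B y


open Filter Topology Set

section AuxLemmasForStmt15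
variable {X : Type*} [NormedAddCommGroup X] [NormedSpace ℝ X]


/-- Recession cone of a set. -/
def recCone (B : Set X) : Set X := {v | ∀ z ∈ B, ∀ t : ℝ, 0 ≤ t → z + t • v ∈ B}

lemma recCone_zero (B : Set X) : (0 : X) ∈ recCone B := by
  intro z hz t _; simpa using hz

lemma recCone_smul {B : Set X} {v : X} (hv : v ∈ recCone B) {a : ℝ} (ha : 0 ≤ a) :
    a • v ∈ recCone B := by
  intro z hz t ht
  have := hv z hz (t * a) (mul_nonneg ht ha)
  simpa [smul_smul] using this

lemma recCone_add {B : Set X} {v w : X} (hv : v ∈ recCone B) (hw : w ∈ recCone B) :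
    v + w ∈ recCone B := by
  intro z hz t ht
  have h1 := hv z hz t ht
  have h2 := hw _ h1 t ht
  simpa [smul_add, add_assoc] using h2

lemma recCone_convex {B : Set X} : Convex ℝ (recCone B) := by
  intro x hx y hy a b ha hb _
  exact recCone_add (recCone_smul hx ha) (recCone_smul hy hb)

lemma recCone_isClosed {B : Set X} (hB : IsClosed B) : IsClosed (recCone B) := by
  have : recCone B = ⋂ (z ∈ B), ⋂ (t ∈ {t : ℝ | 0 ≤ t}), (fun v : X => z + t • v) ⁻¹' B := by
    ext v
    simp [recCone]
  rw [this]
  exact isClosed_biInter fun z _ => isClosed_biInter fun t _ =>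
    hB.preimage (continuous_const.add (continuous_id.const_smul t))

lemma mem_recCone_of_ray {B : Set X} (hconv : Convex ℝ B) (hcl : IsClosed B)
    {b₀ v : X} (hb₀ : b₀ ∈ B) (H : ∀ t : ℝ, 0 ≤ t → b₀ + t • v ∈ B) :
    v ∈ recCone B := by
  intro z hz t ht
  have key : ∀ n : ℕ, (1 - ((n : ℝ) + 1)⁻¹) • z + ((n : ℝ) + 1)⁻¹ • b₀ + t • v ∈ B := by
    intro n
    have hpos : (0:ℝ) < ((n : ℝ) + 1)⁻¹ := by positivity
    have hle : ((n : ℝ) + 1)⁻¹ ≤ 1 := by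
      have h1 : (1:ℝ) ≤ (n : ℝ) + 1 := by
        have := Nat.cast_nonneg (α := ℝ) n
        linarith
      rw [inv_le_one₀ (by linarith : (0:ℝ) < (n:ℝ)+1)]
      exact h1
    have hmem := hconv (a := 1 - ((n : ℝ) + 1)⁻¹) (b := ((n : ℝ) + 1)⁻¹)
      hz (H (((n : ℝ) + 1) * t) (by positivity)) (by linarith) hpos.le (by ring)
    have halg : (1 - ((n : ℝ) + 1)⁻¹) • z + ((n : ℝ) + 1)⁻¹ • (b₀ + (((n : ℝ) + 1) * t) • v)
        = (1 - ((n : ℝ) + 1)⁻¹) • z + ((n : ℝ) + 1)⁻¹ • b₀ + t • v := by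
      have hne : ((n : ℝ) + 1) ≠ 0 := by positivity
      rw [smul_add, smul_smul, inv_mul_cancel_left₀ hne]
      abel
    rw [halg] at hmem
    exact hmem
  have htend : Tendsto (fun n : ℕ => (1 - ((n : ℝ) + 1)⁻¹) • z + ((n : ℝ) + 1)⁻¹ • b₀ + t • v)
      atTop (𝓝 (z + t • v)) := by
    have h0 : Tendsto (fun n : ℕ => ((n : ℝ) + 1)⁻¹) atTop (𝓝 0) := by
      simpa [one_div] using tendsto_one_div_add_atTop_nhds_zero_nat (𝕜 := ℝ)
    have h1 : Tendsto (fun n : ℕ => (1 - ((n : ℝ) + 1)⁻¹) • z) atTop (𝓝 ((1:ℝ) • z)) := by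
      exact (Tendsto.sub tendsto_const_nhds h0).smul_const z |>.congr (fun n => rfl) |>.mono_right
        (by rw [sub_zero])
    have h2 : Tendsto (fun n : ℕ => ((n : ℝ) + 1)⁻¹ • b₀) atTop (𝓝 ((0:ℝ) • b₀)) :=
      h0.smul_const b₀
    have := (h1.add h2).add (tendsto_const_nhds (x := t • v))
    simpa using this
  exact hcl.mem_of_tendsto htend (Filter.Eventually.of_forall key)

/-- A functional negative on the recession cone attains its max on a closed convex set. -/
lemma att [FiniteDimensional ℝ X] {B : Set X} (hcl : IsClosed B) (hconv : Convex ℝ B)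
    (hne : B.Nonempty) (h : X →L[ℝ] ℝ) (hh : ∀ v ∈ recCone B, v ≠ 0 → h v < 0) :
    ∃ q ∈ B, ∀ z ∈ B, h z ≤ h q := by
  obtain ⟨b₀, hb₀⟩ := hne
  set T : Set X := B ∩ {z | h b₀ ≤ h z} with hT
  have hTcl : IsClosed T := hcl.inter (isClosed_le continuous_const h.continuous)
  have hTne : T.Nonempty := ⟨b₀, hb₀, by simp only [Set.mem_setOf_eq]; exact le_refl _⟩
  have hTbd : Bornology.IsBounded T := by
    by_contra hub
    rw [isBounded_iff_forall_norm_le] at hub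
    push_neg at hub
    have hex : ∀ n : ℕ, ∃ z, z ∈ T ∧ (n : ℝ) + ‖b₀‖ < ‖z‖ := fun n => by
      obtain ⟨z, hzT, hz⟩ := hub ((n : ℝ) + ‖b₀‖); exact ⟨z, hzT, hz⟩
    choose z hzT hzn using hex
    set r : ℕ → ℝ := fun n => ‖z n - b₀‖ with hr
    have hrpos : ∀ n : ℕ, (n : ℝ) < r n := by
      intro n
      have h1 : ‖z n‖ - ‖b₀‖ ≤ ‖z n - b₀‖ := norm_sub_norm_le _ _
      have h2 := hzn n
      simp only [hr]
      linarith
    have hrpos' : ∀ n, 0 < r n := fun n => lt_of_le_of_lt (Nat.cast_nonneg n) (hrpos n)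
    set u : ℕ → X := fun n => (r n)⁻¹ • (z n - b₀) with hu
    have husph : ∀ n, u n ∈ Metric.sphere (0:X) 1 := by
      intro n
      have hrn := hrpos' n
      simp only [hu, mem_sphere_iff_norm, sub_zero, norm_smul, norm_inv, Real.norm_eq_abs,
        abs_of_pos hrn]
      exact inv_mul_cancel₀ (ne_of_gt hrn)
    obtain ⟨v, hv, σ, hσ, hσt⟩ := (isCompact_sphere (0:X) 1).tendsto_subseq husph
    have hv1 : ‖v‖ = 1 := by simpa using hv
    have hvne : v ≠ 0 := by
      intro h0; rw [h0, norm_zero] at hv1; norm_num at hv1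
    have hray : ∀ t : ℝ, 0 ≤ t → b₀ + t • v ∈ B := by
      intro t ht
      have hmem : ∀ᶠ k in atTop, b₀ + t • u (σ k) ∈ B := by
        rw [eventually_atTop]
        refine ⟨⌈t⌉₊, fun k hk => ?_⟩
        have htr : t ≤ r (σ k) := by
          have h1 : (k : ℝ) ≤ (σ k : ℝ) := by exact_mod_cast hσ.le_apply
          have h2 : t ≤ (k:ℝ) := le_trans (Nat.le_ceil t) (by exact_mod_cast hk)
          linarith [hrpos (σ k)]
        have hrposk := hrpos' (σ k)
        have hid : b₀ + t • u (σ k) =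
            (1 - t / r (σ k)) • b₀ + (t / r (σ k)) • z (σ k) := by
          simp only [hu, smul_smul, sub_smul, one_smul, smul_sub, div_eq_mul_inv]
          abel
        rw [hid]
        exact hconv (a := 1 - t / r (σ k)) (b := t / r (σ k)) hb₀ (hzT (σ k)).1
          (by rw [sub_nonneg]; exact div_le_one_of_le₀ htr hrposk.le)
          (by positivity) (by ring)
      have htend : Tendsto (fun k => b₀ + t • u (σ k)) atTop (𝓝 (b₀ + t • v)) :=
        tendsto_const_nhds.add (hσt.const_smul t)
      exact hcl.mem_of_tendsto htend hmem
    have hvrec := mem_recCone_of_ray hconv hcl hb₀ hray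
    have hneg := hh v hvrec hvne
    have hge : 0 ≤ h v := by
      have htendh : Tendsto (fun k => h (u (σ k))) atTop (𝓝 (h v)) :=
        (h.continuous.tendsto v).comp hσt
      refine ge_of_tendsto htendh (Eventually.of_forall fun k => ?_)
      have hz' := (hzT (σ k)).2
      simp only [Set.mem_setOf_eq] at hz'
      simp only [hu, map_smul, map_sub, smul_eq_mul]
      have : 0 ≤ h (z (σ k)) - h b₀ := by linarith
      positivity
    linarith
  have hTcpt : IsCompact T := Metric.isCompact_of_isClosed_isBounded hTcl hTbd
  obtain ⟨q, hqT, hqmax⟩ := hTcpt.exists_isMaxOn hTne h.continuous.continuousOn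
  rw [isMaxOn_iff] at hqmax
  refine ⟨q, hqT.1, fun w hw => ?_⟩
  rcases le_or_gt (h b₀) (h w) with hc | hc
  · exact hqmax w ⟨hw, by simp only [Set.mem_setOf_eq]; exact hc⟩
  · exact le_trans hc.le (hqmax b₀ ⟨hb₀, by simp only [Set.mem_setOf_eq]; exact le_refl _⟩)

lemma phi [FiniteDimensional ℝ X] {B : Set X} (hcl : IsClosed B) (hne : B.Nonempty)
    (hnl : ¬ ∃ p v : X, v ≠ 0 ∧ ∀ t : ℝ, p + t • v ∈ B) :
    ∃ φ : X →L[ℝ] ℝ, ∀ v ∈ recCone B, v ≠ 0 → φ v < 0 := by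
  obtain ⟨b₀, hb₀⟩ := hne
  have hpointed : ∀ w ∈ recCone B, -w ∈ recCone B → w = 0 := by
    intro w hw hw'
    by_contra hw0
    refine hnl ⟨b₀, w, hw0, fun t => ?_⟩
    rcases le_or_gt 0 t with ht | ht
    · exact hw b₀ hb₀ t ht
    · have := hw' b₀ hb₀ (-t) (by linarith)
      simpa using this
  set R := recCone B with hRdef
  have hRcl : IsClosed R := recCone_isClosed hcl
  set K := R ∩ Metric.sphere (0:X) 1 with hKdef
  have hKcpt : IsCompact K := (isCompact_sphere (0:X) 1).inter_left hRcl
  obtain ⟨F, hFK, hcover⟩ := hKcpt.elim_nhds_subcover (fun k => Metric.ball k (1/2))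
      (fun k _ => Metric.ball_mem_nhds k (by norm_num))
  set piece : X → Set X := fun k => closure (convexHull ℝ (K ∩ Metric.closedBall k (1/2)))
    with hpiece
  have hpc_ball : ∀ k : X, piece k ⊆ Metric.closedBall k (1/2) := fun k =>
    closure_minimal (convexHull_min inter_subset_right (convex_closedBall k _))
      Metric.isClosed_closedBall
  have hpc_cpt : ∀ k : X, IsCompact (piece k) := fun k =>
    Metric.isCompact_of_isClosed_isBounded isClosed_closure
      (Metric.isBounded_closedBall.subset (hpc_ball k))
  have hpc_conv : ∀ k : X, Convex ℝ (piece k) := fun k => (convex_convexHull ℝ _).closure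
  have hpc_R : ∀ k : X, piece k ⊆ R := fun k =>
    closure_minimal (convexHull_min (inter_subset_left.trans inter_subset_left) recCone_convex)
      hRcl
  have hpc_norm : ∀ k ∈ K, ∀ x ∈ piece k, (1:ℝ)/2 ≤ ‖x‖ := by
    intro k hk x hx
    have h1 : dist x k ≤ 1/2 := (hpc_ball k hx)
    have h2 : ‖k‖ = 1 := by
      have := hk.2; simpa using this
    have h3 : ‖k‖ - ‖x‖ ≤ ‖k - x‖ := norm_sub_norm_le _ _
    rw [dist_comm] at h1
    rw [dist_eq_norm] at h1
    linarith
  -- build compact convex set D with K ⊆ D ⊆ R and 0 ∉ D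
  have key : ∀ G : Finset X, ↑G ⊆ K → ∃ D : Set X, IsCompact D ∧ Convex ℝ D ∧
      D ⊆ R ∧ (0:X) ∉ D ∧ ∀ k ∈ G, piece k ⊆ D := by
    classical
    intro G
    induction G using Finset.induction_on with
    | empty =>
      intro _
      exact ⟨∅, isCompact_empty, convex_empty, empty_subset _, notMem_empty _, by simp⟩
    | @insert k G hkG ih =>
      intro hins
      have hkK : k ∈ K := hins (Finset.mem_insert_self k G)
      have hG : ↑G ⊆ K := fun a ha => hins (by
        simp only [Finset.coe_insert, Set.mem_insert_iff]; right; exact ha)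
      obtain ⟨D, hDcpt, hDconv, hDR, hD0, hDp⟩ := ih hG
      have hk_in_piece : k ∈ piece k := subset_closure (subset_convexHull ℝ _
        ⟨hkK, Metric.mem_closedBall_self (by norm_num)⟩)
      have h0k : (0:X) ∉ piece k := by
        intro h0
        have := hpc_norm k hkK 0 h0
        rw [norm_zero] at this
        linarith
      rcases D.eq_empty_or_nonempty with hDe | ⟨d₀, hd₀⟩
      · refine ⟨piece k, hpc_cpt k, hpc_conv k, hpc_R k, h0k, fun j hj => ?_⟩
        rcases Finset.mem_insert.mp hj with rfl | hjG
        · exact subset_rfl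
        · have := hDp j hjG
          rw [hDe] at this
          exact this.trans (empty_subset _)
      · set J : Set X := (fun p : (X × X) × ℝ => (1 - p.2) • p.1.1 + p.2 • p.1.2) ''
          ((piece k ×ˢ D) ×ˢ Icc (0:ℝ) 1) with hJdef
        have hJeq : J = convexJoin ℝ (piece k) D := by
          ext w
          constructor
          · rintro ⟨⟨⟨a, b⟩, θ⟩, ⟨⟨ha, hb⟩, hθ⟩, rfl⟩
            exact mem_convexJoin.mpr ⟨a, ha, b, hb,
              ⟨1 - θ, θ, by linarith [hθ.2], hθ.1, by ring, rfl⟩⟩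
          · intro hw
            obtain ⟨a, ha, b, hb, u, v, hu, hv, huv, rfl⟩ := mem_convexJoin.mp hw
            exact ⟨⟨⟨a, b⟩, v⟩, ⟨⟨ha, hb⟩, ⟨hv, by linarith⟩⟩, by
              have : u = 1 - v := by linarith
              rw [this]⟩
        have hJcpt : IsCompact J := (((hpc_cpt k).prod hDcpt).prod isCompact_Icc).image (by
          apply Continuous.add
          · exact (continuous_const.sub continuous_snd).smul
              (continuous_fst.comp continuous_fst)
          · exact continuous_snd.smul (continuous_snd.comp continuous_fst))
        have hJconv : Convex ℝ J := by rw [hJeq]; exact (hpc_conv k).convexJoin hDconv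
        have hJR : J ⊆ R := by
          rintro _ ⟨⟨⟨a, b⟩, θ⟩, ⟨⟨ha, hb⟩, hθ⟩, rfl⟩
          exact recCone_add (recCone_smul (hpc_R k ha) (by linarith [hθ.2]))
            (recCone_smul (hDR hb) hθ.1)
        have hJ0 : (0:X) ∉ J := by
          rintro ⟨⟨⟨a, b⟩, θ⟩, ⟨⟨ha, hb⟩, hθ⟩, heq⟩
          have heq' : (1 - θ) • a + θ • b = 0 := heq
          have hθ0 : (0:ℝ) ≤ θ := hθ.1
          have hθle : θ ≤ 1 := hθ.2
          have hw1 : (1 - θ) • a ∈ R := recCone_smul (hpc_R k ha) (by linarith)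
          have hw2 : θ • b ∈ R := recCone_smul (hDR hb) hθ0
          have hneg : -((1 - θ) • a) = θ • b := neg_eq_of_add_eq_zero_right heq'
          have hz1 : (1 - θ) • a = 0 := hpointed _ hw1 (by rw [hneg]; exact hw2)
          have hz2 : θ • b = 0 := by
            rw [hz1, zero_add] at heq'
            exact heq'
          rcases eq_or_lt_of_le hθle with hθ1 | hθ1
          · -- θ = 1 : b = 0 ∈ D, contradiction
            rw [hθ1, one_smul] at hz2
            rw [hz2] at hb
            exact hD0 hb
          · have h1θ : (1 - θ) ≠ 0 := by linarith
            rcases smul_eq_zero.mp hz1 with hh | hh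
            · exact h1θ hh
            · rw [hh] at ha
              exact h0k ha
        refine ⟨J, hJcpt, hJconv, hJR, hJ0, fun j hj => ?_⟩
        rcases Finset.mem_insert.mp hj with rfl | hjG
        · intro a ha
          exact ⟨⟨⟨a, d₀⟩, 0⟩, ⟨⟨ha, hd₀⟩, by norm_num⟩, by simp⟩
        · refine (hDp j hjG).trans ?_
          intro b hb
          exact ⟨⟨⟨k, b⟩, 1⟩, ⟨⟨hk_in_piece, hb⟩, by norm_num⟩, by simp⟩
  obtain ⟨D, hDcpt, hDconv, hDR, hD0, hDp⟩ := key F hFK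
  have hKD : K ⊆ D := by
    intro x hx
    obtain ⟨k, hkF, hxk⟩ := Set.mem_iUnion₂.mp (hcover hx)
    exact hDp k hkF (subset_closure (subset_convexHull ℝ _
      ⟨hx, Metric.ball_subset_closedBall hxk⟩))
  obtain ⟨f, u, hfu, hu0⟩ := geometric_hahn_banach_closed_point hDconv hDcpt.isClosed hD0
  have hu0' : u < 0 := by simpa using hu0
  refine ⟨f, fun v hv hv0 => ?_⟩
  have hvn : 0 < ‖v‖ := norm_pos_iff.mpr hv0
  have hw : ‖v‖⁻¹ • v ∈ K := by
    refine ⟨recCone_smul hv (inv_nonneg.mpr hvn.le), ?_⟩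
    simp [norm_smul, abs_of_pos (inv_pos.mpr hvn), inv_mul_cancel₀ (ne_of_gt hvn)]
  have hfv : f (‖v‖⁻¹ • v) < u := hfu _ (hKD hw)
  have hvf : f v = ‖v‖ * f (‖v‖⁻¹ • v) := by
    rw [map_smul, smul_eq_mul, ← mul_assoc, mul_inv_cancel₀ (ne_of_gt hvn), one_mul]
  rw [hvf]
  exact mul_neg_of_pos_of_neg hvn (lt_trans hfv hu0')

/-- A functional bounded above on `B` is nonpositive on the recession cone. -/
lemma recCone_f_nonpos {B : Set X} {f : X →L[ℝ] ℝ} {s : ℝ} (hne : B.Nonempty)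
    (hf : ∀ z ∈ B, f z ≤ s) {v : X} (hv : v ∈ recCone B) : f v ≤ 0 := by
  obtain ⟨b₀, hb₀⟩ := hne
  by_contra hpos
  push_neg at hpos
  have ht : (0:ℝ) ≤ (s - f b₀ + 1) / f v := by
    have h1 : f b₀ ≤ s := hf b₀ hb₀
    apply div_nonneg (by linarith) hpos.le
  have hmem := hv b₀ hb₀ _ ht
  have := hf _ hmem
  rw [map_add, map_smul, smul_eq_mul, div_mul_cancel₀ _ (ne_of_gt hpos)] at this
  linarith


end AuxLemmasForStmt15

set_option maxHeartbeats 1600000 in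
theorem stmt_15 {X : Type*} [NormedAddCommGroup X] [NormedSpace ℝ X]
    [FiniteDimensional ℝ X] (hd : 2 ≤ Module.finrank ℝ X)
    (C : Set X) (hclosed : IsClosed C) (hconv : Convex ℝ C) (hne : C ≠ Set.univ)
    (hint : (interior C).Nonempty)
    (hnoline : ¬ ∃ (p v : X), v ≠ 0 ∧ ∀ t : ℝ, p + t • v ∈ C)
    (B₁ B₂ : Set X)
    (hB₁ : IsClosed B₁ ∧ Convex ℝ B₁ ∧ (interior B₁).Nonempty ∧ B₁ ≠ Set.univ)
    (hB₂ : IsClosed B₂ ∧ Convex ℝ B₂ ∧ (interior B₂).Nonempty ∧ B₂ ≠ Set.univ)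
    (h12 : B₁ ⊆ B₂) (h2C : B₂ ⊆ C) :
    eExt C B₁ ⊆ eExt C B₂ := by
  obtain ⟨hB₁cl, hB₁conv, hB₁int, -⟩ := hB₁
  have hB₁C : B₁ ⊆ C := h12.trans h2C
  have hB₁ne : B₁.Nonempty := hB₁int.mono interior_subset
  obtain ⟨b₀, hb₀⟩ := hB₁ne
  have hnlB₁ : ¬ ∃ p v : X, v ≠ 0 ∧ ∀ t : ℝ, p + t • v ∈ B₁ := by
    rintro ⟨p, v, hv, hpv⟩
    exact hnoline ⟨p, v, hv, fun t => hB₁C (hpv t)⟩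
  obtain ⟨φ₀, hφ₀⟩ := phi hB₁cl ⟨b₀, hb₀⟩ hnlB₁
  obtain ⟨q₀, hq₀B, hq₀max⟩ := att hB₁cl hB₁conv ⟨b₀, hb₀⟩ φ₀ hφ₀
  intro x hx
  -- usable form of hx
  have hxK : ∀ q ∈ relBdry C B₁, ∀ g' : X →L[ℝ] ℝ, ‖g'‖ = 1 →
      (∀ z ∈ B₁, g' z ≤ g' q) → g' x ≤ g' q := by
    intro q hq g' hg'1 hg's
    have h1 : x ∈ Kset B₁ q := by
      simp only [eExt, Set.mem_iInter] at hx
      exact hx q hq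
    simp only [Kset, Set.mem_iInter, Set.mem_setOf_eq] at h1
    exact h1 g' ⟨hg'1, hg's⟩
  simp only [eExt, Set.mem_iInter]
  intro y hy
  simp only [Kset, Set.mem_iInter, Set.mem_setOf_eq]
  rintro g ⟨hg1, hgs⟩
  obtain ⟨⟨hyC, hyclB₂⟩, hyclCB₂⟩ := hy
  have hCB_mono : C \ B₂ ⊆ C \ B₁ := fun z hz => ⟨hz.1, fun hzB => hz.2 (h12 hzB)⟩
  have hyclCB₁ : y ∈ closure (C \ B₁) := closure_mono hCB_mono hyclCB₂
  by_cases hyB₁ : y ∈ B₁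
  · -- Case 1 : y itself lies in the relative boundary of B₁
    exact hxK y ⟨⟨hyC, subset_closure hyB₁⟩, hyclCB₁⟩ g hg1 (fun z hz => hgs z (h12 hz))
  · -- Case 2
    by_contra hcon
    push_neg at hcon
    obtain ⟨f₁, u, hfu, huy⟩ := geometric_hahn_banach_closed_point hB₁conv hB₁cl hyB₁
    obtain ⟨d, hd, hgx⟩ : ∃ d : ℝ, 0 < d ∧ g x = g y + d :=
      ⟨g x - g y, sub_pos.mpr hcon, by ring⟩
    obtain ⟨γ, hγ, hf₁y⟩ : ∃ γ : ℝ, 0 < γ ∧ f₁ y = u + γ :=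
      ⟨f₁ y - u, sub_pos.mpr huy, by ring⟩
    obtain ⟨lam, hlam, hlamγ⟩ : ∃ lam : ℝ, 0 < lam ∧ lam * γ = |φ₀ y - φ₀ q₀| + 1 :=
      ⟨(|φ₀ y - φ₀ q₀| + 1) / γ, by positivity, by field_simp⟩
    obtain ⟨M, hMdef⟩ : ∃ M : ℝ, M = φ₀ q₀ + lam * u := ⟨_, rfl⟩
    have hφle : ∀ z ∈ B₁, φ₀ z + lam * f₁ z ≤ M := by
      intro z hz
      have h1 := hq₀max z hz
      have h2 : lam * f₁ z ≤ lam * u := mul_le_mul_of_nonneg_left (hfu z hz).le hlam.le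
      rw [hMdef]; linarith
    have hφy : M + 1 ≤ φ₀ y + lam * f₁ y := by
      have h3 : φ₀ q₀ - φ₀ y ≤ |φ₀ y - φ₀ q₀| := by
        rw [abs_sub_comm]; exact le_abs_self _
      have h4 : lam * f₁ y = lam * u + lam * γ := by rw [hf₁y]; ring
      rw [hMdef, h4, hlamγ]
      linarith
    have hφrec : ∀ v ∈ recCone B₁, v ≠ 0 → φ₀ v + lam * f₁ v < 0 := by
      intro v hv hv0
      have h1 := hφ₀ v hv hv0
      have h2 : f₁ v ≤ 0 := recCone_f_nonpos ⟨b₀, hb₀⟩ (fun z hz => (hfu z hz).le) hv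
      nlinarith
    obtain ⟨ε, hε, hεeq⟩ :
        ∃ ε : ℝ, 0 < ε ∧ ε * (|M - (φ₀ x + lam * f₁ x)| + 1) = d / 2 :=
      ⟨d / (2 * (|M - (φ₀ x + lam * f₁ x)| + 1)), by positivity, by field_simp⟩
    obtain ⟨h, hh_app⟩ : ∃ h : X →L[ℝ] ℝ, ∀ w, h w = g w + ε * (φ₀ w + lam * f₁ w) :=
      ⟨g + ε • (φ₀ + lam • f₁), fun w => by
        simp only [ContinuousLinearMap.add_apply, ContinuousLinearMap.coe_smul',
          Pi.smul_apply, smul_eq_mul]⟩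
    have hhrec : ∀ v ∈ recCone B₁, v ≠ 0 → h v < 0 := by
      intro v hv hv0
      have h1 : g v ≤ 0 := recCone_f_nonpos ⟨b₀, hb₀⟩ (fun z hz => hgs z (h12 hz)) hv
      have h2 := hφrec v hv hv0
      rw [hh_app]
      nlinarith
    obtain ⟨q, hqB, hqmax⟩ := att hB₁cl hB₁conv ⟨b₀, hb₀⟩ h hhrec
    have hgq : g q ≤ g y := hgs q (h12 hqB)
    have hhq : h q ≤ g y + ε * M := by
      rw [hh_app]
      have h1 := hφle q hqB
      nlinarith
    have hhx : g y + ε * M < h x := by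
      rw [hh_app, hgx]
      have h1 : M - (φ₀ x + lam * f₁ x) ≤ |M - (φ₀ x + lam * f₁ x)| := le_abs_self _
      have h3 : 0 ≤ |M - (φ₀ x + lam * f₁ x)| := abs_nonneg _
      nlinarith
    -- choose c close to y
    obtain ⟨ρ, hρ, hρeq⟩ : ∃ ρ : ℝ, 0 < ρ ∧ (‖h‖ + 1) * ρ = ε :=
      ⟨ε / (‖h‖ + 1), by positivity, by field_simp⟩
    obtain ⟨c, hcmem, hcdist⟩ := Metric.mem_closure_iff.mp hyclCB₁ ρ hρ
    obtain ⟨hcC, hcB₁⟩ := hcmem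
    have hhy : g y + ε * M + ε ≤ h y := by
      rw [hh_app]
      nlinarith [hφy]
    have hhyc : h y - h c ≤ ‖h‖ * dist y c := by
      have h1 := h.le_opNorm (y - c)
      have h2 : h y - h c = h (y - c) := by rw [map_sub]
      have h3 : h (y - c) ≤ ‖h (y - c)‖ := le_abs_self _
      rw [dist_eq_norm]
      linarith
    have hhc : h q < h c := by
      have h2 : ‖h‖ * dist y c ≤ (‖h‖ + 1) * dist y c := by
        nlinarith [dist_nonneg (x := y) (y := c)]
      have h3 : (‖h‖ + 1) * dist y c < (‖h‖ + 1) * ρ :=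
        mul_lt_mul_of_pos_left hcdist (by positivity)
      linarith
    -- q is in the relative boundary of B₁
    have hqC : q ∈ C := hB₁C hqB
    have hqcl : q ∈ closure (C \ B₁) := by
      have htend : Tendsto (fun n : ℕ => q + ((n : ℝ) + 1)⁻¹ • (c - q)) atTop (𝓝 q) := by
        have h0 : Tendsto (fun n : ℕ => ((n : ℝ) + 1)⁻¹) atTop (𝓝 0) := by
          simpa [one_div] using tendsto_one_div_add_atTop_nhds_zero_nat (𝕜 := ℝ)
        have h1 : Tendsto (fun n : ℕ => ((n : ℝ) + 1)⁻¹ • (c - q)) atTop (𝓝 ((0:ℝ) • (c - q))) :=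
          h0.smul_const _
        rw [zero_smul] at h1
        simpa using tendsto_const_nhds.add h1
      refine mem_closure_of_tendsto htend (Eventually.of_forall fun n => ?_)
      have hpos : (0:ℝ) < ((n : ℝ) + 1)⁻¹ := by positivity
      have hle1 : ((n : ℝ) + 1)⁻¹ ≤ 1 := by
        rw [inv_le_one₀ (by positivity)]
        have := Nat.cast_nonneg (α := ℝ) n
        linarith
      constructor
      · have halg : q + ((n : ℝ) + 1)⁻¹ • (c - q)
            = (1 - ((n : ℝ) + 1)⁻¹) • q + ((n : ℝ) + 1)⁻¹ • c := by
          rw [smul_sub, sub_smul, one_smul]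
          abel
        rw [halg]
        exact hconv (a := 1 - ((n : ℝ) + 1)⁻¹) (b := ((n : ℝ) + 1)⁻¹) hqC hcC
          (by linarith) hpos.le (by ring)
      · intro hmem
        have h1 := hqmax _ hmem
        rw [map_add, map_smul, map_sub, smul_eq_mul] at h1
        nlinarith [hhc]
    -- final contradiction via the normalized functional
    have hne0 : h ≠ 0 := by
      intro h0
      rw [h0] at hhc
      simp at hhc
    have hnorm : 0 < ‖h‖ := norm_pos_iff.mpr hne0
    obtain ⟨g', hg'def⟩ : ∃ g' : X →L[ℝ] ℝ, g' = ‖h‖⁻¹ • h := ⟨_, rfl⟩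
    have hg'app : ∀ w : X, g' w = ‖h‖⁻¹ * h w := fun w => by simp [hg'def]
    have hg'1 : ‖g'‖ = 1 := by
      have hns := norm_smul (‖h‖⁻¹) h
      rw [hg'def, hns, norm_inv, norm_norm]
      exact inv_mul_cancel₀ (ne_of_gt hnorm)
    have hg's : ∀ z ∈ B₁, g' z ≤ g' q := by
      intro z hz
      rw [hg'app, hg'app]
      exact mul_le_mul_of_nonneg_left (hqmax z hz) (inv_nonneg.mpr hnorm.le)
    have hfin := hxK q ⟨⟨hqC, subset_closure hqB⟩, hqcl⟩ g' hg'1 hg's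
    rw [hg'app, hg'app] at hfin
    have hxq : h x ≤ h q := le_of_mul_le_mul_left hfin (inv_pos.mpr hnorm)
    linarith
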